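/- Let L' be a non-degenerate even lattice and let L = L'(3) denote the same Z-module with bilinear form multiplied by 3, and assume L is not unimodular. Then L admits no isometry f of order 3 that acts trivially on the discriminant group A_L = L*/L, where L* = Hom(L, Z) is embedded via the bilinear form. -/

import Mathlib

section Aux

variable {L : Type*} [AddCommGroup L] [Module ℤ L]

/-- Unambiguous integer scaling on `L`, via the ring `Module.End ℤ L`. -/
private def msm (c : ℤ) (x : L) : L := ((c : Module.End ℤ L)) x

private lemma msm_end (g : Module.End ℤ L) (c : ℤ) (x : L) :
    g (msm c x) = msm c (g x) := by
  show g ((c : Module.End ℤ L) x) = (c : Module.End ℤ L) (g x)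
  calc g ((c : Module.End ℤ L) x) = (g * (c : Module.End ℤ L)) x := (Module.End.mul_apply _ _ _).symm
    _ = ((c : Module.End ℤ L) * g) x := by rw [← (Int.cast_commute c g).eq]
    _ = (c : Module.End ℤ L) (g x) := Module.End.mul_apply _ _ _

private lemma msm_msm (c d : ℤ) (x : L) : msm c (msm d x) = msm (c * d) x := by
  show (c : Module.End ℤ L) ((d : Module.End ℤ L) x) = ((c * d : ℤ) : Module.End ℤ L) x
  rw [Int.cast_mul, Module.End.mul_apply]

private lemma msm_three (x : L) : msm 3 x = x + x + x := by
  show ((3 : ℤ) : Module.End ℤ L) x = x + x + x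
  have h : ((3 : ℤ) : Module.End ℤ L) = 1 + 1 + 1 := by norm_num
  rw [h]
  simp [LinearMap.add_apply]

private lemma msm_neg (c : ℤ) (x : L) : msm c (-x) = -msm c x := map_neg _ _

private lemma msm_sub (c : ℤ) (x y : L) : msm c (x - y) = msm c x - msm c y := map_sub _ _ _

private lemma msm_coord (φ : L →ₗ[ℤ] ℤ) (c : ℤ) (x : L) : φ (msm c x) = c * φ x := by
  show φ ((c : Module.End ℤ L) x) = c * φ x
  rw [Module.End.intCast_apply, map_zsmul, smul_eq_mul]

private lemma msm_cancel3 [Module.Free ℤ L] {a b : L} (h : msm 3 a = msm 3 b) : a = b := by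
  have h2 : (3 : ℤ) • a = (3 : ℤ) • b := by
    rw [← Module.End.intCast_apply (R := ℤ) 3 a, ← Module.End.intCast_apply (R := ℤ) 3 b]
    exact h
  rw [← Int.cast_smul_eq_zsmul ℤ 3 a, ← Int.cast_smul_eq_zsmul ℤ 3 b] at h2
  exact smul_right_injective L (by norm_num) h2

private lemma int_all_pow_dvd {a : ℤ} (ha : ∀ n : ℕ, (3 : ℤ) ^ (n + 1) ∣ a) : a = 0 := by
  by_contra h
  have h1 : (3 : ℤ) ^ (a.natAbs + 1) ≤ |a| :=
    Int.le_of_dvd (abs_pos.mpr h) ((dvd_abs _ _).mpr (ha a.natAbs))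
  have hn : a.natAbs < 3 ^ (a.natAbs + 1) :=
    lt_of_lt_of_le (Nat.lt_pow_self (by norm_num : 1 < 3)) (Nat.pow_le_pow_right (by norm_num) (Nat.le_succ _))
  have h2 : |a| < (3 : ℤ) ^ (a.natAbs + 1) := by
    rw [Int.abs_eq_natAbs]
    exact_mod_cast hn
  linarith

end Aux

/-- Let `L'` be a non-degenerate even lattice with form `B`, and let
`L = L'(3)` be the same module with form `3B`, assumed not unimodular (the map
`l ↦ 3 • B l` into `Hom(L, ℤ)` is not surjective).  Then `L` admits no isometry of
order 3 acting trivially on the discriminant group `A_L = L*/L`. -/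
theorem stmt2 {L : Type*} [AddCommGroup L] [Module ℤ L] [Module.Free ℤ L]
    [Module.Finite ℤ L]
    (B : L →ₗ[ℤ] L →ₗ[ℤ] ℤ)
    (hsymm : ∀ x y, B x y = B y x)
    (hnondeg : ∀ x, (∀ y, B x y = 0) → x = 0)
    (heven : ∀ x, Even (B x x))
    (hnotunimodular : ¬ ∀ φ : L →ₗ[ℤ] ℤ, ∃ l : L, φ = (3 : ℤ) • B l) :
    ¬ ∃ f : Module.End ℤ L,
        (∀ x y, B (f x) (f y) = B x y) ∧ f ^ 3 = 1 ∧ f ≠ 1 ∧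
        (∀ φ : L →ₗ[ℤ] ℤ, ∃ l : L, φ ∘ₗ (f : L →ₗ[ℤ] L) = φ + (3 : ℤ) • B l) := by
  rintro ⟨f, hiso, hcube, hne, htriv⟩
  have hf3 : ∀ x, f (f (f x)) = x := by
    intro x
    have h := congrArg (fun g : Module.End ℤ L => g x) hcube
    simpa [pow_succ, Module.End.mul_apply, Module.End.one_apply] using h
  set g : Module.End ℤ L := f - 1 with hg
  have hgapp : ∀ x, g x = f x - x := by
    intro x
    simp [hg, LinearMap.sub_apply]
  -- Step 1: `f x - x ∈ 3 L` for every `x`.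
  have step1 : ∀ x : L, ∃ l : L, f x - x = msm 3 l := by
    intro x
    obtain ⟨l, hl⟩ := htriv (B (f x))
    refine ⟨-l, ?_⟩
    have key : f x - x - msm 3 (-l) = 0 := by
      apply hnondeg
      intro y
      have h1 := congrArg (fun φ : L →ₗ[ℤ] ℤ => φ y) hl
      simp only [LinearMap.comp_apply, LinearMap.add_apply, LinearMap.smul_apply,
        smul_eq_mul] at h1
      have h2 : B (f x) (f y) = B x y := hiso x y
      have h3 : B (msm 3 (-l)) y = -(3 * B l y) := by
        rw [msm_three]
        simp only [map_add, map_neg, LinearMap.add_apply, LinearMap.neg_apply]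
        ring
      simp only [map_sub, LinearMap.sub_apply, h3]
      linarith [h1, h2]
    exact sub_eq_zero.mp key
  -- The cubic relation for `g = f - 1`.
  have e : ∀ y, f y = y + g y := by
    intro y
    rw [hgapp]
    abel
  have hrelx : ∀ x, g (g (g x)) + (g (g x) + g (g x) + g (g x)) + (g x + g x + g x) = 0 := by
    intro x
    have h2 : g (g (g x)) + (g (g x) + g (g x) + g (g x)) + (g x + g x + g x)
        = f (f (f x)) - x := by
      simp only [e, map_add]
      abel
    rw [h2, hf3, sub_self]
  -- Induction: `g x` is divisible by every power of 3.
  have hdiv : ∀ n : ℕ, ∀ x : L, ∃ y, g x = msm ((3 : ℤ) ^ (n + 1)) y := by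
    intro n
    induction n with
    | zero =>
      intro x
      obtain ⟨l, hl⟩ := step1 x
      exact ⟨l, by rw [hgapp, hl, pow_one]⟩
    | succ n ih =>
      intro x
      obtain ⟨y₁, h₁⟩ := ih x
      obtain ⟨y₂, h₂⟩ := ih y₁
      obtain ⟨y₃, h₃⟩ := ih y₂
      have hg2 : g (g x) = msm ((3:ℤ)^(n+1) * (3:ℤ)^(n+1)) y₂ := by
        rw [h₁, msm_end, h₂, msm_msm]
      have hg3 : g (g (g x)) = msm ((3:ℤ)^(n+1) * (3:ℤ)^(n+1) * (3:ℤ)^(n+1)) y₃ := by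
        rw [hg2, msm_end, h₃, msm_msm]
      have hrx := hrelx x
      rw [hg3, hg2] at hrx
      have e5 : msm 3 (g x)
          = -(msm ((3:ℤ)^(n+1) * (3:ℤ)^(n+1) * (3:ℤ)^(n+1)) y₃
              + (msm ((3:ℤ)^(n+1) * (3:ℤ)^(n+1)) y₂ + msm ((3:ℤ)^(n+1) * (3:ℤ)^(n+1)) y₂
                + msm ((3:ℤ)^(n+1) * (3:ℤ)^(n+1)) y₂)) := by
        rw [msm_three]
        exact eq_neg_of_add_eq_zero_right hrx
      have hC : msm (3 * ((3:ℤ)^(n+1) * (3:ℤ)^(n+1))) y₂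
          = msm ((3:ℤ)^(n+1) * (3:ℤ)^(n+1)) y₂ + msm ((3:ℤ)^(n+1) * (3:ℤ)^(n+1)) y₂
            + msm ((3:ℤ)^(n+1) * (3:ℤ)^(n+1)) y₂ := by
        rw [← msm_msm, msm_three]
      have e6 : msm 3 (g x)
          = -(msm ((3:ℤ)^(n+1) * (3:ℤ)^(n+1) * (3:ℤ)^(n+1)) y₃)
            - msm (3 * ((3:ℤ)^(n+1) * (3:ℤ)^(n+1))) y₂ := by
        rw [e5, hC]
        abel
      refine ⟨-(msm ((3:ℤ)^(2*n)) y₃) - msm ((3:ℤ)^n) y₂, msm_cancel3 ?_⟩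
      rw [e6, msm_msm, msm_sub, msm_neg, msm_msm, msm_msm]
      rw [show (3:ℤ) * (3:ℤ)^(n+1+1) * (3:ℤ)^(2*n)
            = (3:ℤ)^(n+1) * (3:ℤ)^(n+1) * (3:ℤ)^(n+1) from by ring,
          show (3:ℤ) * (3:ℤ)^(n+1+1) * (3:ℤ)^n
            = 3 * ((3:ℤ)^(n+1) * (3:ℤ)^(n+1)) from by ring]
  -- Conclude `g = 0`.
  have hgzero : ∀ x : L, g x = 0 := by
    intro x
    let b := Module.Free.chooseBasis ℤ L
    have hcoord : ∀ i, b.repr (g x) i = 0 := by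
      intro i
      apply int_all_pow_dvd
      intro n
      obtain ⟨y, hy⟩ := hdiv n x
      refine ⟨b.repr y i, ?_⟩
      have := msm_coord (b.coord i) ((3:ℤ)^(n+1)) y
      rw [← Module.Basis.coord_apply, hy, this, Module.Basis.coord_apply]
    have : b.repr (g x) = 0 := by
      ext i
      simpa using hcoord i
    simpa using congrArg b.repr.symm this
  apply hne
  ext x
  have h0 := hgapp x
  rw [hgzero x] at h0
  have hfx : f x = x := sub_eq_zero.mp h0.symm
  simpa using hfx
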